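/- In the formal power series ring A[[T]], if a, b, k, k′ ∈ A satisfy a·b − b·a = (q − q⁻¹)(k′ − k), k·a = q²·a·k, and a·k′ = q²·k′·a, then Ψ_q^{(1)}(a) · (b + k′·T) = (b + k·T) · Ψ_q^{(1)}(a); equivalently, conjugation by the invertible series Ψ_q^{(1)}(a) sends b + k′·T to b + k·T. (This is the paper's Lemma 11.1 on sl₂-triples: for an sl₂ triple (e, f, K, K′) with [e,f] = (q−q⁻¹)(K′−K), Ke = q²eK, K′e = q⁻²eK′ and any element X q-commuting appropriately, Ad_{g_b(e⊗X)}(f⊗1 + K′⊗X) = f⊗1 + K⊗X, with a = e⊗X, b = f⊗1, k = K⊗X, k′ = K′⊗X.) -/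

import Mathlib

/-- The formal quantum dilogarithm series
`Ψ_p⁽ᵐ⁾(a) = Σ_{n≥0} (p^{n²} / ∏_{k=1}^{n}(1 − p^{2k})) aⁿ T^{mn}`
in the formal power series ring `A[[T]]`. -/
noncomputable def Psi {K : Type*} [Field K] (A : Type*) [Ring A] [Algebra K A]
    (p : K) (m : ℕ) (a : A) : PowerSeries A :=
  PowerSeries.mk fun n =>
    if m ∣ n then
      (p ^ ((n / m) ^ 2) / ∏ k ∈ Finset.Icc 1 (n / m), (1 - p ^ (2 * k))) • a ^ (n / m)
    else 0

/-- Lemma on sl₂-triples: if `a·b − b·a = (q − q⁻¹)(k′ − k)`,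
`k·a = q²·a·k` and `a·k′ = q²·k′·a` in `A`, then in `A[[T]]` we have
`Ψ_q⁽¹⁾(a) · (b + k′·T) = (b + k·T) · Ψ_q⁽¹⁾(a)`. -/
theorem sl2_dilogarithm_conjugation
    {K : Type*} [Field K] {A : Type*} [Ring A] [Algebra K A]
    (q : K) (hq0 : q ≠ 0) (hq : ∀ n : ℕ, 1 ≤ n → q ^ n ≠ 1)
    (a b k k' : A)
    (hab : a * b - b * a = (q - q⁻¹) • (k' - k))
    (hka : k * a = (q ^ 2) • (a * k))
    (hak' : a * k' = (q ^ 2) • (k' * a)) :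
    Psi A q 1 a * (PowerSeries.C (R := A) b + PowerSeries.C (R := A) k' * PowerSeries.X)
      = (PowerSeries.C (R := A) b + PowerSeries.C (R := A) k * PowerSeries.X) * Psi A q 1 a := by
  have hq2 : (q : K) ^ 2 ≠ 0 := pow_ne_zero _ hq0
  set u : K := (q ^ 2)⁻¹ with hu
  -- basic commutation relations
  have hak : a * k = u • (k * a) := by
    rw [hka, smul_smul, hu, inv_mul_cancel₀ hq2, one_smul]
  have hk'a : k' * a = u • (a * k') := by
    rw [hak', smul_smul, hu, inv_mul_cancel₀ hq2, one_smul]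
  -- powers
  have hk'apow : ∀ n : ℕ, k' * a ^ n = (u ^ n) • (a ^ n * k') := by
    intro n
    induction n with
    | zero => simp
    | succ n ih =>
      calc k' * a ^ (n + 1) = (k' * a ^ n) * a := by rw [pow_succ, mul_assoc]
        _ = (u ^ n) • (a ^ n * (k' * a)) := by rw [ih, smul_mul_assoc, mul_assoc]
        _ = (u ^ (n + 1)) • (a ^ (n + 1) * k') := by
            rw [hk'a, mul_smul_comm, smul_smul, ← pow_succ, ← mul_assoc, ← pow_succ]
  -- the key commutator formula
  have main : ∀ n : ℕ, a ^ (n + 1) * b - b * a ^ (n + 1)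
      = (q - q⁻¹ ^ (2 * n + 1)) • (a ^ n * k' - k * a ^ n) := by
    intro n
    induction n with
    | zero => simpa using hab
    | succ n ih =>
      have h3 : a ^ (n + 1) * b
          = b * a ^ (n + 1) + (q - q⁻¹ ^ (2 * n + 1)) • (a ^ n * k' - k * a ^ n) :=
        sub_eq_iff_eq_add'.mp ih
      have hx : a * (k * a ^ n) = u • (k * a ^ (n + 1)) := by
        rw [← mul_assoc, hak, smul_mul_assoc, mul_assoc, ← pow_succ']
      have habn : a * b = b * a + (q - q⁻¹) • (k' - k) := sub_eq_iff_eq_add'.mp hab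
      set s : K := q - q⁻¹ ^ (2 * n + 1) with hs
      have e1 : (q - q⁻¹) * u ^ (n + 1) + s = q - q⁻¹ ^ (2 * (n + 1) + 1) := by
        rw [hs, hu]
        simp only [inv_pow]
        field_simp
        ring
      have e2 : (q - q⁻¹) + s * u = q - q⁻¹ ^ (2 * (n + 1) + 1) := by
        rw [hs, hu]
        simp only [inv_pow]
        field_simp
        ring
      calc a ^ (n + 1 + 1) * b - b * a ^ (n + 1 + 1)
          = a * (a ^ (n + 1) * b) - b * a ^ (n + 1 + 1) := by
            rw [← mul_assoc, ← pow_succ']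
        _ = a * b * a ^ (n + 1) + s • (a * (a ^ n * k') - a * (k * a ^ n))
              - b * a ^ (n + 1 + 1) := by
            rw [h3, mul_add, mul_smul_comm, mul_sub, ← mul_assoc]
        _ = a * b * a ^ (n + 1) + s • (a ^ (n + 1) * k') - (s * u) • (k * a ^ (n + 1))
              - b * a ^ (n + 1 + 1) := by
            rw [smul_sub, hx, smul_smul, ← mul_assoc, ← pow_succ']
            abel
        _ = (q - q⁻¹) • ((k' - k) * a ^ (n + 1)) + s • (a ^ (n + 1) * k')
              - (s * u) • (k * a ^ (n + 1)) := by
            rw [habn, add_mul, smul_mul_assoc, mul_assoc b a, ← pow_succ']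
            abel
        _ = ((q - q⁻¹) * u ^ (n + 1)) • (a ^ (n + 1) * k')
              - (q - q⁻¹) • (k * a ^ (n + 1)) + s • (a ^ (n + 1) * k')
              - (s * u) • (k * a ^ (n + 1)) := by
            rw [sub_mul, hk'apow (n + 1), smul_sub, smul_smul]
        _ = ((q - q⁻¹) * u ^ (n + 1) + s) • (a ^ (n + 1) * k')
              - ((q - q⁻¹) + s * u) • (k * a ^ (n + 1)) := by
            rw [add_smul, add_smul]
            abel
        _ = (q - q⁻¹ ^ (2 * (n + 1) + 1)) • (a ^ (n + 1) * k' - k * a ^ (n + 1)) := by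
            rw [e1, e2, smul_sub]
  -- the scalar coefficients of Psi
  set c : ℕ → K := fun n => q ^ n ^ 2 / ∏ j ∈ Finset.Icc 1 n, (1 - q ^ (2 * j)) with hc
  have hprod_ne : ∀ n : ℕ, (∏ j ∈ Finset.Icc 1 n, (1 - q ^ (2 * j))) ≠ 0 := by
    intro n
    refine Finset.prod_ne_zero_iff.mpr fun j hj => ?_
    have hj1 : 1 ≤ j := (Finset.mem_Icc.mp hj).1
    have : q ^ (2 * j) ≠ 1 := hq (2 * j) (by omega)
    intro h
    exact this (by linear_combination -h)
  -- the scalar recursion : c (n+1) * (q - q⁻¹ ^ (2n+1)) = - c n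
  have hcrec : ∀ n : ℕ, c (n + 1) * (q - q⁻¹ ^ (2 * n + 1)) = - c n := by
    intro n
    have hstep : (∏ j ∈ Finset.Icc 1 (n + 1), (1 - q ^ (2 * j)))
        = (∏ j ∈ Finset.Icc 1 n, (1 - q ^ (2 * j))) * (1 - q ^ (2 * (n + 1))) := by
      rw [Finset.prod_Icc_succ_top (by omega)]
    have h1 : (1 : K) - q ^ (2 * (n + 1)) ≠ 0 := by
      have : q ^ (2 * (n + 1)) ≠ 1 := hq _ (by omega)
      intro h
      exact this (by linear_combination -h)
    rw [hc]
    simp only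
    rw [hstep]
    have hsq : (n + 1) ^ 2 = n ^ 2 + (2 * n + 1) := by ring
    have h1' : (1 : K) - q ^ 2 * q ^ (n * 2) ≠ 0 := by
      have := h1
      rwa [show 2 * (n + 1) = 2 + n * 2 by ring, pow_add] at this
    rw [hsq, pow_add]
    simp only [inv_pow]
    field_simp [hprod_ne n, h1', hq0]
    ring
  have hPsi : Psi A q 1 a = PowerSeries.mk fun n => c n • a ^ n := by
    unfold Psi
    simp [Nat.div_one, hc]
  rw [hPsi]
  ext n
  rw [mul_add, add_mul, ← mul_assoc, mul_assoc (PowerSeries.C (R := A) k)]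
  rw [← (PowerSeries.commute_X ((PowerSeries.mk fun n => c n • a ^ n))).eq]
  rw [← mul_assoc]
  cases n with
  | zero =>
    simp [PowerSeries.coeff_zero_mul_X, PowerSeries.coeff_mul_C, PowerSeries.coeff_C_mul,
      PowerSeries.coeff_mk]
  | succ n =>
    simp only [map_add, PowerSeries.coeff_mul_C, PowerSeries.coeff_C_mul,
      PowerSeries.coeff_succ_mul_X, PowerSeries.coeff_mk]
    have hmain := main n
    have : c (n + 1) • (a ^ (n + 1) * b - b * a ^ (n + 1))
        = c n • (k * a ^ n - a ^ n * k') := by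
      rw [hmain, smul_smul, hcrec n, neg_smul, smul_sub, smul_sub]
      abel
    rw [smul_sub, smul_sub] at this
    have := sub_eq_sub_iff_add_eq_add.mp this
    simp only [smul_mul_assoc, mul_smul_comm]
    linear_combination (norm := abel) this
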